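/- Let m, n be positive integers and let (a,b,c,d,ℓ) satisfy a ∣ m, b ∣ a, c ∣ n, d ∣ c, a/b = c/d, 1 ≤ ℓ ≤ a/b, gcd(ℓ, a/b) = 1, and let K = {(i·m/a, i·ℓ·n/c + j·n/d) : 0 ≤ i ≤ a−1, 0 ≤ j ≤ d−1} ≤ Z_m × Z_n. Then the quotient group (Z_m × Z_n)/K is isomorphic to Z_{gcd(m/a, n/c)} × Z_{lcm(m/b, n/d)}. -/

import Mathlib

theorem ap_coprime (x ℓ e : ℕ) (hx : x ≠ 0) (hℓ : ℓ ≠ 0) (h : Nat.Coprime ℓ e) :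
    Nat.Coprime (ℓ + (x / x.gcd (ℓ ^ x)) * e) x := by
  set k := x / x.gcd (ℓ ^ x) with hk
  by_contra hcon
  obtain ⟨p, pp, hp1, hp2⟩ := Nat.Prime.not_coprime_iff_dvd.mp hcon
  have hgdvd : x.gcd (ℓ ^ x) ∣ x := Nat.gcd_dvd_left _ _
  have hgne : x.gcd (ℓ ^ x) ≠ 0 := (Nat.pos_of_ne_zero (fun hh => hx (Nat.eq_zero_of_gcd_eq_zero_left hh))).ne'
  have hkne : k ≠ 0 := by
    rw [hk]
    exact (Nat.div_pos (Nat.le_of_dvd (Nat.pos_of_ne_zero hx) hgdvd) (Nat.pos_of_ne_zero hgne)).ne'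
  have hfk : k.factorization p = x.factorization p - (x.gcd (ℓ ^ x)).factorization p := by
    rw [hk, Nat.factorization_div hgdvd]; simp
  have hfg : (x.gcd (ℓ ^ x)).factorization p = min (x.factorization p) (x * ℓ.factorization p) := by
    rw [Nat.factorization_gcd hx (pow_ne_zero _ hℓ), Nat.factorization_pow]
    simp
  by_cases hpl : p ∣ ℓ
  · have hpe : ¬ p ∣ e := fun hpe => Nat.Prime.not_dvd_one pp (h ▸ Nat.dvd_gcd hpl hpe)
    have h1 : 1 ≤ ℓ.factorization p := (pp.dvd_iff_one_le_factorization hℓ).mp hpl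
    have hxf : x.factorization p ≤ x * ℓ.factorization p :=
      le_trans (Nat.factorization_lt p hx).le (Nat.le_mul_of_pos_right x h1)
    have hfk0 : k.factorization p = 0 := by rw [hfk, hfg]; omega
    have hpk : ¬ p ∣ k := fun hpk => by
      have := (pp.dvd_iff_one_le_factorization hkne).mp hpk; omega
    have hpke : p ∣ k * e := (Nat.dvd_add_right hpl).mp hp1
    rcases (Nat.Prime.dvd_mul pp).mp hpke with h' | h' <;> [exact hpk h'; exact hpe h']
  · have hl0 : ℓ.factorization p = 0 := Nat.factorization_eq_zero_of_not_dvd hpl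
    have hx1 : 1 ≤ x.factorization p := (pp.dvd_iff_one_le_factorization hx).mp hp2
    have hk1 : 1 ≤ k.factorization p := by rw [hfk, hfg, hl0]; omega
    have hpk : p ∣ k := (pp.dvd_iff_one_le_factorization hkne).mpr hk1
    exact hpl ((Nat.dvd_add_right (hpk.mul_right e)).mp (Nat.add_comm ℓ (k*e) ▸ hp1))

theorem main_aux (m n e b d ℓ g A' f' : ℕ)
    (hm : m = e * b * (g * A')) (hn : n = d * (e * (g * f')))
    (hb : 0 < b) (hd : 0 < d) (he : 0 < e) (hg : 0 < g) (hA' : 0 < A') (hf' : 0 < f')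
    (hℓ1 : 1 ≤ ℓ) (hcoe : Nat.Coprime ℓ e) (hcop : Nat.Coprime A' f')
    (K : AddSubgroup (ZMod m × ZMod n))
    (hK : (K : Set (ZMod m × ZMod n)) =
      {x | ∃ i < e * b, ∃ j < d,
        x = (((i * (g * A') : ℕ) : ZMod m), ((i * ℓ * (g * f') + j * (e * (g * f')) : ℕ) : ZMod n))}) :
    Nonempty (((ZMod m × ZMod n) ⧸ K) ≃+
      (ZMod g × ZMod (A' * (e * (g * f'))))) := by
  classical
  set L : ℕ := A' * (e * (g * f')) with hL
  set k : ℕ := A' / A'.gcd (ℓ ^ A') with hk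
  have hcop2 : Nat.Coprime (ℓ + k * e) A' :=
    ap_coprime A' ℓ e hA'.ne' (by omega) hcoe
  have hcop3 : Nat.Coprime A' (f' * (ℓ + k * e)) :=
    Nat.Coprime.mul_right hcop (Nat.Coprime.symm hcop2)
  obtain ⟨α, β, hdet⟩ : ∃ α β : ℤ, α * (A' : ℤ) + β * ((f' : ℤ) * ((ℓ : ℤ) + (k : ℤ) * (e : ℤ))) = 1 := by
    obtain ⟨u, v, huv⟩ := Nat.isCoprime_iff_coprime.mpr hcop3
    exact ⟨u, v, by push_cast at huv ⊢; linarith [huv]⟩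
  set γ : ℤ := -((f' : ℤ) * ((ℓ : ℤ) + (k : ℤ) * (e : ℤ))) with hγ
  set δ : ℤ := (A' : ℤ) with hδ
  have hdet' : α * δ - β * γ = 1 := by rw [hγ, hδ]; linarith [hdet]
  -- the homomorphisms
  set ψ : ℤ × ℤ →+ ZMod g × ZMod L :=
    AddMonoidHom.prod
      (AddMonoidHom.mk' (fun p => ((α * p.1 + β * p.2 : ℤ) : ZMod g))
        (by intro p q; simp only [Prod.fst_add, Prod.snd_add]; push_cast; ring))
      (AddMonoidHom.mk' (fun p => ((γ * p.1 + δ * p.2 : ℤ) : ZMod L))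
        (by intro p q; simp only [Prod.fst_add, Prod.snd_add]; push_cast; ring)) with hψ
  set π : ℤ × ℤ →+ ZMod m × ZMod n :=
    AddMonoidHom.prodMap (Int.castAddHom (ZMod m)) (Int.castAddHom (ZMod n)) with hπ
  set ρ : ℤ × ℤ →+ (ZMod m × ZMod n) ⧸ K := (QuotientAddGroup.mk' K).comp π with hρ
  have hψs : Function.Surjective ψ := by
    intro ⟨u, v⟩
    obtain ⟨z, hz⟩ := ZMod.intCast_surjective u
    obtain ⟨w, hw⟩ := ZMod.intCast_surjective v
    refine ⟨(δ * z - β * w, -γ * z + α * w), ?_⟩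
    have e1 : α * (δ * z - β * w) + β * (-γ * z + α * w) = z := by linear_combination z * hdet'
    have e2 : γ * (δ * z - β * w) + δ * (-γ * z + α * w) = w := by linear_combination w * hdet'
    simp only [hψ, AddMonoidHom.prod_apply, AddMonoidHom.mk'_apply, Prod.mk.injEq]
    rw [e1, e2]; exact ⟨hz, hw⟩
  have hπs : Function.Surjective π := by
    intro ⟨u, v⟩
    obtain ⟨z, hz⟩ := ZMod.intCast_surjective u
    obtain ⟨w, hw⟩ := ZMod.intCast_surjective v
    exact ⟨(z, w), Prod.ext hz hw⟩
  have hρs : Function.Surjective ρ := by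
    rw [hρ, AddMonoidHom.coe_comp]
    exact (QuotientAddGroup.mk'_surjective K).comp hπs
  have hker : ρ.ker ≤ ψ.ker := by
    rintro ⟨x, y⟩ hxy
    have hmem : π (x, y) ∈ K := by
      rw [AddMonoidHom.mem_ker, hρ, AddMonoidHom.comp_apply] at hxy
      exact (QuotientAddGroup.eq_zero_iff _).mp hxy
    have hmem' : π (x, y) ∈ (K : Set (ZMod m × ZMod n)) := hmem
    rw [hK] at hmem'
    obtain ⟨i, hi, j, hj, hxy'⟩ := hmem'
    have hπxy : π (x, y) = ((x : ZMod m), (y : ZMod n)) := rfl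
    rw [hπxy, Prod.mk.injEq] at hxy'
    obtain ⟨hx1, hy1⟩ := hxy'
    have hx2 : ((x : ℤ) : ZMod m) = (((i * (g * A') : ℕ) : ℤ) : ZMod m) := by
      rw [Int.cast_natCast]; exact hx1
    have hy2 : ((y : ℤ) : ZMod n) = (((i * ℓ * (g * f') + j * (e * (g * f')) : ℕ) : ℤ) : ZMod n) := by
      rw [Int.cast_natCast]; exact hy1
    obtain ⟨s, hs⟩ := ((ZMod.intCast_eq_intCast_iff _ _ _).mp hx2).dvd
    obtain ⟨t, ht⟩ := ((ZMod.intCast_eq_intCast_iff _ _ _).mp hy2).dvd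
    have xeq : x = ((i * (g * A') : ℕ) : ℤ) - (m : ℤ) * s := by linarith [hs]
    have yeq : y = ((i * ℓ * (g * f') + j * (e * (g * f')) : ℕ) : ℤ) - (n : ℤ) * t := by
      linarith [ht]
    rw [AddMonoidHom.mem_ker, hψ]
    have c1 : ((α * x + β * y : ℤ) : ZMod g) = 0 := by
      rw [ZMod.intCast_zmod_eq_zero_iff_dvd]
      have hgx : (g : ℤ) ∣ x := ⟨(i : ℤ) * A' - (e : ℤ) * b * A' * s, by
        rw [xeq, hm]; push_cast; ring⟩
      have hgy : (g : ℤ) ∣ y := ⟨(i : ℤ) * ℓ * f' + (j : ℤ) * (e * f') - (d : ℤ) * e * f' * t, by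
        rw [yeq, hn]; push_cast; ring⟩
      exact dvd_add (hgx.mul_left α) (hgy.mul_left β)
    have c2 : ((γ * x + δ * y : ℤ) : ZMod L) = 0 := by
      rw [ZMod.intCast_zmod_eq_zero_iff_dvd]
      refine ⟨-((i : ℤ) * k) + (j : ℤ) + s * b * ((ℓ : ℤ) + (k : ℤ) * e) - t * d, ?_⟩
      rw [xeq, yeq, hγ, hδ, hm, hn, hL]
      push_cast
      ring
    exact Prod.ext c1 c2
  -- cardinalities
  have hcardK : Nat.card K = e * b * d := by
    set F : Fin (e * b) × Fin d → ZMod m × ZMod n := fun p =>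
      (((p.1.val * (g * A') : ℕ) : ZMod m),
       ((p.1.val * ℓ * (g * f') + p.2.val * (e * (g * f')) : ℕ) : ZMod n)) with hF
    have hrange : (K : Set (ZMod m × ZMod n)) = Set.range F := by
      rw [hK]
      ext x
      simp only [Set.mem_setOf_eq, Set.mem_range, hF]
      constructor
      · rintro ⟨i, hi, j, hj, hx⟩
        exact ⟨(⟨i, hi⟩, ⟨j, hj⟩), hx.symm⟩
      · rintro ⟨⟨i, j⟩, hx⟩
        exact ⟨i.val, i.isLt, j.val, j.isLt, hx.symm⟩
    have hinj : Function.Injective F := by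
      rintro ⟨i, j⟩ ⟨i', j'⟩ hpq
      rw [hF, Prod.mk.injEq] at hpq
      obtain ⟨h1, h2⟩ := hpq
      have hgA : 0 < g * A' := by positivity
      have hD : 0 < e * (g * f') := by positivity
      have hii : i = i' := by
        have hmod := (ZMod.natCast_eq_natCast_iff _ _ _).mp h1
        unfold Nat.ModEq at hmod
        rw [Nat.mod_eq_of_lt (by rw [hm]; exact Nat.mul_lt_mul_of_lt_of_le i.isLt le_rfl hgA),
            Nat.mod_eq_of_lt (by rw [hm]; exact Nat.mul_lt_mul_of_lt_of_le i'.isLt le_rfl hgA)] at hmod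
        exact Fin.ext (Nat.eq_of_mul_eq_mul_right hgA hmod)
      subst hii
      have hjj : j = j' := by
        have h3 := (ZMod.natCast_eq_natCast_iff _ _ _).mp h2
        have h4 : j.val * (e * (g * f')) ≡ j'.val * (e * (g * f')) [MOD n] :=
          Nat.ModEq.add_left_cancel (Nat.ModEq.refl _) h3
        unfold Nat.ModEq at h4
        rw [Nat.mod_eq_of_lt (by rw [hn]; exact Nat.mul_lt_mul_of_lt_of_le j.isLt le_rfl hD),
            Nat.mod_eq_of_lt (by rw [hn]; exact Nat.mul_lt_mul_of_lt_of_le j'.isLt le_rfl hD)] at h4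
        exact Fin.ext (Nat.eq_of_mul_eq_mul_right hD h4)
      rw [hjj]
    calc Nat.card K = Nat.card (Set.range F) := Nat.card_congr (Equiv.setCongr hrange)
      _ = Nat.card (Fin (e * b) × Fin d) := Nat.card_range_of_injective hinj
      _ = e * b * d := by simp [Nat.card_prod]
  have hLpos : 0 < g * L := by positivity
  have hindψ : (ψ.ker).index = g * L := by
    rw [AddSubgroup.index_eq_card]
    rw [Nat.card_congr (QuotientAddGroup.quotientKerEquivOfSurjective ψ hψs).toEquiv]
    simp [Nat.card_prod, Nat.card_zmod]
  have hindρ : (ρ.ker).index = g * L := by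
    have h1 : K.index * (e * b * d) = m * n := by
      rw [← hcardK]
      simpa [Nat.card_prod, Nat.card_zmod] using AddSubgroup.index_mul_card K
    have hmn : m * n = (g * L) * (e * b * d) := by rw [hm, hn, hL]; ring
    have hebd : 0 < e * b * d := by positivity
    have hKind : K.index = g * L := Nat.eq_of_mul_eq_mul_right hebd (by rw [h1, hmn])
    rw [AddSubgroup.index_eq_card,
      Nat.card_congr (QuotientAddGroup.quotientKerEquivOfSurjective ρ hρs).toEquiv,
      ← AddSubgroup.index_eq_card, hKind]
  have hkeq : ρ.ker = ψ.ker := by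
    refine le_antisymm hker ?_
    have h2 := AddSubgroup.relIndex_mul_index hker
    rw [hindψ, hindρ] at h2
    have : (ρ.ker).relIndex ψ.ker = 1 :=
      Nat.eq_of_mul_eq_mul_right hLpos (by rw [h2, one_mul])
    exact AddSubgroup.relIndex_eq_one.mp this
  exact ⟨((QuotientAddGroup.quotientKerEquivOfSurjective ρ hρs).symm.trans
    (QuotientAddGroup.quotientAddEquivOfEq hkeq)).trans
    (QuotientAddGroup.quotientKerEquivOfSurjective ψ hψs)⟩

/-- The quotient `(Z_m × Z_n)/K` of `Z_m × Z_n` by the subgroup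
`K = {(i·m/a, i·ℓ·n/c + j·n/d) : 0 ≤ i < a, 0 ≤ j < d}` is isomorphic to
`Z_{gcd(m/a, n/c)} × Z_{lcm(m/b, n/d)}`. -/
theorem quotient_repres (m n a b c d ℓ : ℕ) (hm : 0 < m) (hn : 0 < n)
    (ham : a ∣ m) (hba : b ∣ a) (hcn : c ∣ n) (hdc : d ∣ c)
    (he : a / b = c / d) (hℓ1 : 1 ≤ ℓ) (hℓ2 : ℓ ≤ a / b) (hℓ3 : Nat.gcd ℓ (a / b) = 1)
    (K : AddSubgroup (ZMod m × ZMod n))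
    (hK : (K : Set (ZMod m × ZMod n)) =
      {x | ∃ i < a, ∃ j < d,
        x = (((i * (m / a) : ℕ) : ZMod m), ((i * ℓ * (n / c) + j * (n / d) : ℕ) : ZMod n))}) :
    Nonempty (((ZMod m × ZMod n) ⧸ K) ≃+
      (ZMod (Nat.gcd (m / a) (n / c)) × ZMod (Nat.lcm (m / b) (n / d)))) := by
  have ha0 : 0 < a := Nat.pos_of_dvd_of_pos ham hm
  have hb0 : 0 < b := Nat.pos_of_dvd_of_pos hba ha0
  have hc0 : 0 < c := Nat.pos_of_dvd_of_pos hcn hn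
  have hd0 : 0 < d := Nat.pos_of_dvd_of_pos hdc hc0
  set e := a / b with he'
  have he0 : 0 < e := Nat.div_pos (Nat.le_of_dvd ha0 hba) hb0
  have hae : a = e * b := (Nat.div_mul_cancel hba).symm
  have hce : c = e * d := by rw [he]; exact (Nat.div_mul_cancel hdc).symm
  have hA0 : 0 < m / a := Nat.div_pos (Nat.le_of_dvd hm ham) ha0
  have hf0 : 0 < n / c := Nat.div_pos (Nat.le_of_dvd hn hcn) hc0
  set g := Nat.gcd (m / a) (n / c) with hg'
  have hg0 : 0 < g := Nat.gcd_pos_of_pos_left _ hA0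
  set A' := (m / a) / g with hA''
  set f' := (n / c) / g with hf''
  have hma : m / a = g * A' := by rw [hA'', Nat.mul_div_cancel' (Nat.gcd_dvd_left _ _)]
  have hnc2 : n / c = g * f' := by rw [hf'', Nat.mul_div_cancel' (Nat.gcd_dvd_right _ _)]
  have hA'0 : 0 < A' := by
    rcases Nat.eq_zero_or_pos A' with h | h
    · rw [h, Nat.mul_zero] at hma; omega
    · exact h
  have hf'0 : 0 < f' := by
    rcases Nat.eq_zero_or_pos f' with h | h
    · rw [h, Nat.mul_zero] at hnc2; omega
    · exact h
  have hcop : Nat.Coprime A' f' := Nat.coprime_div_gcd_div_gcd hg0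
  have hmm : m = e * b * (g * A') := by
    rw [← hae, ← hma]; exact (Nat.mul_div_cancel' ham).symm
  have hnn0 : n = d * (e * (n / c)) := by
    nth_rewrite 1 [← Nat.mul_div_cancel' hcn]
    rw [hce]; ring
  rw [hnc2] at hnn0
  have hnn : n = d * (e * (g * f')) := hnn0
  have hnd : n / d = e * (g * f') := by
    rw [hnn, Nat.mul_div_cancel_left _ hd0]
  have hmb0 : m = b * (e * (g * A')) := by rw [hmm]; ring
  have hmb : m / b = e * (g * A') := by
    rw [hmb0, Nat.mul_div_cancel_left _ hb0]
  have hlcm : Nat.lcm (m / b) (n / d) = A' * (e * (g * f')) := by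
    rw [hmb, hnd, Nat.lcm_mul_left, Nat.lcm_mul_left, Nat.Coprime.lcm_eq_mul hcop]
    ring
  rw [hma, hnc2, hnd] at hK
  rw [hae] at hK
  rw [hlcm]
  exact main_aux m n e b d ℓ g A' f' hmm hnn hb0 hd0 he0 hg0 hA'0 hf'0 hℓ1 hℓ3 hcop K hK
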